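/- Let X, Y₁, Y₂ be compact ordered spaces, let f₁ : X → Y₁ be a continuous monotone surjection, and let f₂ : X → Y₂ be a continuous monotone map. Then there exists a continuous monotone map g : Y₁ → Y₂ with g ∘ f₁ = f₂ if and only if for all x, y ∈ X, f₁ x ≤ f₁ y implies f₂ x ≤ f₂ y. -/

import Mathlib

/-- Given a continuous monotone surjection `f₁ : X ↠ Y₁` and a continuous monotone map
`f₂ : X → Y₂` between compact ordered spaces, `f₂` factors through `f₁` via a continuous
monotone map iff `f₁ x ≤ f₁ y` implies `f₂ x ≤ f₂ y`. -/
theorem exists_factor_iff {X Y₁ Y₂ : Type*}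
    [TopologicalSpace X] [CompactSpace X] [PartialOrder X] [OrderClosedTopology X]
    [TopologicalSpace Y₁] [CompactSpace Y₁] [PartialOrder Y₁] [OrderClosedTopology Y₁]
    [TopologicalSpace Y₂] [CompactSpace Y₂] [PartialOrder Y₂] [OrderClosedTopology Y₂]
    {f₁ : X → Y₁} (hf₁c : Continuous f₁) (hf₁m : Monotone f₁)
    (hf₁s : Function.Surjective f₁)
    {f₂ : X → Y₂} (hf₂c : Continuous f₂) (hf₂m : Monotone f₂) :
    (∃ g : Y₁ → Y₂, Continuous g ∧ Monotone g ∧ g ∘ f₁ = f₂) ↔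
      ∀ x y : X, f₁ x ≤ f₁ y → f₂ x ≤ f₂ y := by
  constructor
  · rintro ⟨g, -, hgm, rfl⟩ x y h
    exact hgm h
  · intro h
    set g : Y₁ → Y₂ := f₂ ∘ Function.surjInv hf₁s with hg
    have key : ∀ x, g (f₁ x) = f₂ x := by
      intro x
      have h1 : f₁ (Function.surjInv hf₁s (f₁ x)) = f₁ x := Function.surjInv_eq hf₁s _
      exact le_antisymm (h _ _ h1.le) (h _ _ h1.ge)
    have hgf : g ∘ f₁ = f₂ := funext key
    have hq : Topology.IsQuotientMap f₁ := Topology.IsQuotientMap.of_surjective_continuous hf₁s hf₁c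
    refine ⟨g, ?_, ?_, hgf⟩
    · rw [hq.continuous_iff, hgf]; exact hf₂c
    · intro a b hab
      obtain ⟨x, rfl⟩ := hf₁s a
      obtain ⟨y, rfl⟩ := hf₁s b
      rw [key, key]
      exact h x y hab
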